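/- For a permutation σ = (h_1,...,h_d) of (1,...,d) whose associated Euler fishbone contains exactly v strict inequality signs (i.e., σ has v positions i with h_i > h_{i+1}), the set of tuples (X_1,...,X_d) ∈ {1,...,n}^d satisfying the fishbone has cardinality C(n-v+d-1, d) (the tetrahedral number T_{n-v}^d), for all n ≥ 1. -/

import Mathlib

namespace Stmt11

variable {d : ℕ}

/-- `strictB σ j` says that the fishbone sign at position `j` is strict,
i.e. `σ (j+1) < σ j`. -/
def strictB (σ : Equiv.Perm (Fin d)) (j : ℕ) : Bool :=
  if h : j + 1 < d then decide (σ ⟨j + 1, h⟩ < σ ⟨j, Nat.lt_of_succ_lt h⟩) else false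

/-- number of weak signs at positions `≥ k`. -/
def wgt (σ : Equiv.Perm (Fin d)) (k : ℕ) : ℕ :=
  ((Finset.Ico k (d - 1)).filter fun j => ¬ strictB σ j).card

/-- number of strict signs at positions `≥ k`. -/
def sct (σ : Equiv.Perm (Fin d)) (k : ℕ) : ℕ :=
  ((Finset.Ico k (d - 1)).filter fun j => strictB σ j).card

lemma strictB_true_iff (σ : Equiv.Perm (Fin d)) {j : ℕ} (hj : j + 1 < d) :
    strictB σ j = true ↔ σ ⟨j + 1, hj⟩ < σ ⟨j, Nat.lt_of_succ_lt hj⟩ := by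
  simp [strictB, hj]

lemma strictB_false_iff (σ : Equiv.Perm (Fin d)) {j : ℕ} (hj : j + 1 < d) :
    strictB σ j = false ↔ σ ⟨j, Nat.lt_of_succ_lt hj⟩ < σ ⟨j + 1, hj⟩ := by
  have hne : σ ⟨j + 1, hj⟩ ≠ σ ⟨j, Nat.lt_of_succ_lt hj⟩ := by
    intro h
    have := σ.injective h
    simp [Fin.ext_iff] at this
  rw [← Bool.not_eq_true, strictB_true_iff σ hj]
  constructor
  · intro h; exact lt_of_le_of_ne (not_lt.mp h) (Ne.symm hne)
  · intro h; exact not_lt.mpr h.le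

lemma sct_add_wgt (σ : Equiv.Perm (Fin d)) (k : ℕ) :
    sct σ k + wgt σ k = d - 1 - k := by
  rw [sct, wgt, Finset.card_filter_add_card_filter_not, Nat.card_Ico]

lemma sct_le (σ : Equiv.Perm (Fin d)) {k l : ℕ} (h : k ≤ l) : sct σ l ≤ sct σ k :=
  Finset.card_le_card (Finset.filter_subset_filter _ (Finset.Ico_subset_Ico h le_rfl))

lemma sct_zero_le (σ : Equiv.Perm (Fin d)) (k : ℕ) : sct σ 0 ≤ k + sct σ k := by
  by_cases h : k ≤ d - 1
  · have : Finset.Ico 0 (d-1) = Finset.Ico 0 k ∪ Finset.Ico k (d-1) :=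
      (Finset.Ico_union_Ico_eq_Ico (Nat.zero_le k) h).symm
    rw [sct, this, Finset.filter_union]
    calc _ ≤ ((Finset.Ico 0 k).filter fun j => strictB σ j).card
            + ((Finset.Ico k (d-1)).filter fun j => strictB σ j).card :=
          Finset.card_union_le _ _
      _ ≤ k + sct σ k := by
          refine Nat.add_le_add ?_ le_rfl
          calc _ ≤ (Finset.Ico 0 k).card := Finset.card_filter_le _ _
            _ = k := by rw [Nat.card_Ico]; omega
  · have : sct σ 0 ≤ d - 1 - 0 := by
      rw [← sct_add_wgt σ 0]; omega
    omega

lemma wgt_le (σ : Equiv.Perm (Fin d)) (k : ℕ) : wgt σ k ≤ d - 1 - k := by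
  have := sct_add_wgt σ k; omega

lemma wgt_succ (σ : Equiv.Perm (Fin d)) {k : ℕ} (h : k < d - 1) :
    wgt σ k = wgt σ (k + 1) + (if strictB σ k then 0 else 1) := by
  rw [wgt, ← Finset.insert_Ico_add_one_left_eq_Ico h, Finset.filter_insert]
  by_cases hs : strictB σ k
  · simp [hs, wgt, Nat.succ_eq_add_one]
  · have hs' : strictB σ k = false := by simpa using hs
    have hk : k ∉ (Finset.Ico (k+1) (d-1)).filter fun j => ¬ strictB σ j := by
      simp
    simp only [hs', Bool.false_eq_true, not_false_eq_true, if_true, if_false,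
      Nat.succ_eq_add_one]
    rw [Finset.card_insert_of_notMem hk]
    simp [wgt]

/-- strict anti from consecutive strict decreases. -/
lemma strictAnti_of_succ {α : Type*} [Preorder α] {f : Fin d → α}
    (h : ∀ (j : ℕ) (hj : j + 1 < d), f ⟨j + 1, hj⟩ < f ⟨j, Nat.lt_of_succ_lt hj⟩) :
    StrictAnti f := by
  have key : ∀ (m : ℕ) (hm : m < d) (a : Fin d), (a : ℕ) < m → f ⟨m, hm⟩ < f a := by
    intro m
    induction m with
    | zero => intro hm a ha; omega
    | succ m ih =>
      intro hm a ha
      rcases Nat.lt_or_ge (a : ℕ) m with h' | h'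
      · exact (h m hm).trans (ih (Nat.lt_of_succ_lt hm) a h')
      · have : a = ⟨m, Nat.lt_of_succ_lt hm⟩ := Fin.ext (by simp; omega)
        rw [this]; exact h m hm
  intro a b hab
  have : b = ⟨(b : ℕ), b.isLt⟩ := Fin.ext rfl
  rw [this]
  exact key (b : ℕ) b.isLt a hab

/-- gaps of a strictly antitone function into `Fin M`. -/
lemma strictAnti_gap {M : ℕ} {f : Fin d → Fin M} (hf : StrictAnti f) :
    ∀ (m : ℕ) (hm : m < d) (a : Fin d), (a : ℕ) ≤ m →
      (f ⟨m, hm⟩ : ℕ) + (m - (a : ℕ)) ≤ f a := by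
  intro m
  induction m with
  | zero =>
    intro hm a ha
    have : a = ⟨0, hm⟩ := Fin.ext (by simp; omega)
    rw [this]; simp
  | succ m ih =>
    intro hm a ha
    rcases Nat.lt_or_ge (a : ℕ) (m + 1) with h' | h'
    · have hlt : f ⟨m + 1, hm⟩ < f ⟨m, Nat.lt_of_succ_lt hm⟩ := by
        apply hf; simp [Fin.lt_def]
      have h2 := ih (Nat.lt_of_succ_lt hm) a (by omega)
      have hlt' : (f ⟨m + 1, hm⟩ : ℕ) < f ⟨m, Nat.lt_of_succ_lt hm⟩ := hlt
      omega
    · have : a = ⟨m + 1, hm⟩ := Fin.ext (by simp; omega)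
      rw [this]; simp

lemma card_strictMono (M k : ℕ) :
    Nat.card {W : Fin k → Fin M // StrictMono W} = M.choose k := by
  have e : {W : Fin k → Fin M // StrictMono W} ≃ {s : Finset (Fin M) // s.card = k} :=
  { toFun := fun W => ⟨Finset.image W.1 Finset.univ, by
      rw [Finset.card_image_of_injective _ W.2.injective, Finset.card_univ, Fintype.card_fin]⟩
    invFun := fun s => ⟨⇑(s.1.orderEmbOfFin s.2), (s.1.orderEmbOfFin s.2).strictMono⟩
    left_inv := fun W => Subtype.ext <| by
      exact (Finset.orderEmbOfFin_unique _
        (fun x => Finset.mem_image_of_mem _ (Finset.mem_univ x)) W.2).symm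
    right_inv := fun s => Subtype.ext <| Finset.coe_injective <| by
      rw [Finset.coe_image, Finset.coe_univ, Set.image_univ, Finset.range_orderEmbOfFin] }
  rw [Nat.card_congr e, Nat.card_eq_fintype_card, Fintype.card_finset_len, Fintype.card_fin]

lemma card_strictAnti (M k : ℕ) :
    Nat.card {W : Fin k → Fin M // StrictAnti W} = M.choose k := by
  have e : {W : Fin k → Fin M // StrictAnti W} ≃ {W : Fin k → Fin M // StrictMono W} :=
  { toFun := fun W => ⟨fun i => (W.1 i).rev, fun a b hab => Fin.rev_lt_rev.mpr (W.2 hab)⟩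
    invFun := fun W => ⟨fun i => (W.1 i).rev, fun a b hab => Fin.rev_lt_rev.mpr (W.2 hab)⟩
    left_inv := fun W => Subtype.ext <| funext fun i => Fin.rev_rev _
    right_inv := fun W => Subtype.ext <| funext fun i => Fin.rev_rev _ }
  rw [Nat.card_congr e, card_strictMono]

end Stmt11

open Stmt11 in
/-- The fishbone set of a permutation `σ` with `v` strict signs (descents of the
sequence `σ 0, σ 1, ...`) has cardinality `C(n - v + d - 1, d)`.  Entries of the
tuples range over `Fin n`, representing `{1,...,n}`. -/
theorem stmt11 (n d : ℕ) (hn : 1 ≤ n) (hd : 1 ≤ d) (σ : Equiv.Perm (Fin d)) (v : ℕ)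
    (hv : v = Nat.card {i : Fin d // ∃ hi : (i : ℕ) + 1 < d, σ ⟨(i : ℕ) + 1, hi⟩ < σ i}) :
    Nat.card {X : Fin d → Fin n //
        ∀ (i : Fin d) (hi : (i : ℕ) + 1 < d),
          if σ i < σ ⟨(i : ℕ) + 1, hi⟩ then X (σ ⟨(i : ℕ) + 1, hi⟩) ≤ X (σ i)
          else X (σ ⟨(i : ℕ) + 1, hi⟩) < X (σ i)} =
      Nat.choose (n - v + d - 1) d := by
  -- identify v with sct σ 0
  have hvv : v = sct σ 0 := by
    rw [hv]
    have e : {i : Fin d // ∃ hi : (i : ℕ) + 1 < d, σ ⟨(i : ℕ) + 1, hi⟩ < σ i} ≃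
        {j : ℕ // j ∈ (Finset.Ico 0 (d - 1)).filter fun j => strictB σ j} :=
    { toFun := fun i => ⟨(i.1 : ℕ), by
        obtain ⟨hi, hlt⟩ := i.2
        simp only [Finset.mem_filter, Finset.mem_Ico]
        refine ⟨⟨Nat.zero_le _, by omega⟩, ?_⟩
        rw [strictB_true_iff σ hi]
        exact lt_of_lt_of_le hlt (le_of_eq (congrArg σ (Fin.ext rfl)))⟩
      invFun := fun j => by
        refine ⟨⟨j.1, ?_⟩, ?_⟩
        · have := j.2; simp only [Finset.mem_filter, Finset.mem_Ico] at this; omega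
        · have hj := j.2
          simp only [Finset.mem_filter, Finset.mem_Ico] at hj
          have hlt : j.1 + 1 < d := by omega
          refine ⟨hlt, ?_⟩
          exact (strictB_true_iff σ hlt).mp hj.2
      left_inv := fun i => Subtype.ext (Fin.ext rfl)
      right_inv := fun j => Subtype.ext rfl }
    rw [Nat.card_congr e, Nat.card_eq_fintype_card, Fintype.card_coe, sct]
  set v' := sct σ 0 with hv'
  set M := n + (d - 1 - v') with hM
  -- equivalence with reindexed chains
  have e1 : {X : Fin d → Fin n //
        ∀ (i : Fin d) (hi : (i : ℕ) + 1 < d),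
          if σ i < σ ⟨(i : ℕ) + 1, hi⟩ then X (σ ⟨(i : ℕ) + 1, hi⟩) ≤ X (σ i)
          else X (σ ⟨(i : ℕ) + 1, hi⟩) < X (σ i)} ≃
      {Y : Fin d → Fin n //
        ∀ (i : ℕ) (hi : i + 1 < d),
          if strictB σ i then Y ⟨i + 1, hi⟩ < Y ⟨i, Nat.lt_of_succ_lt hi⟩
          else Y ⟨i + 1, hi⟩ ≤ Y ⟨i, Nat.lt_of_succ_lt hi⟩} := by
    refine Equiv.subtypeEquiv (Equiv.arrowCongr σ.symm (Equiv.refl (Fin n))) ?_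
    intro X
    simp only [Equiv.arrowCongr_apply, Equiv.coe_refl, Function.comp, Equiv.symm_symm,
      Equiv.refl_apply, id]
    constructor
    · intro h i hi
      have hh := h ⟨i, Nat.lt_of_succ_lt hi⟩ hi
      by_cases hs : strictB σ i
      · rw [if_pos hs]
        have := (strictB_true_iff σ hi).mp hs
        rw [if_neg (not_lt.mpr this.le)] at hh
        exact hh
      · rw [if_neg hs]
        have := (strictB_false_iff σ hi).mp (Bool.not_eq_true _ ▸ eq_false_of_ne_true hs)
        rw [if_pos this] at hh
        exact hh
    · intro h i hi
      have hh := h (i : ℕ) hi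
      by_cases hs : strictB σ (i : ℕ)
      · have hlt := (strictB_true_iff σ hi).mp hs
        rw [if_neg (not_lt.mpr hlt.le)]
        rw [if_pos hs] at hh
        exact lt_of_lt_of_le hh (le_of_eq (congrArg _ (congrArg σ (Fin.ext rfl))))
      · have hlt := (strictB_false_iff σ hi).mp (Bool.not_eq_true _ ▸ eq_false_of_ne_true hs)
        rw [if_pos (lt_of_le_of_lt (le_of_eq (congrArg σ (Fin.ext rfl))) hlt)]
        rw [if_neg hs] at hh
        exact le_trans hh (le_of_eq (congrArg _ (congrArg σ (Fin.ext rfl))))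
  -- main equivalence with strictly antitone maps
  have e2 : {Y : Fin d → Fin n //
        ∀ (i : ℕ) (hi : i + 1 < d),
          if strictB σ i then Y ⟨i + 1, hi⟩ < Y ⟨i, Nat.lt_of_succ_lt hi⟩
          else Y ⟨i + 1, hi⟩ ≤ Y ⟨i, Nat.lt_of_succ_lt hi⟩} ≃
      {W : Fin d → Fin M // StrictAnti W} := by
    refine
    { toFun := fun Y => ⟨fun k => ⟨(Y.1 k : ℕ) + wgt σ (k : ℕ), ?_⟩, ?_⟩
      invFun := fun W => ⟨fun k => ⟨(W.1 k : ℕ) - wgt σ (k : ℕ), ?_⟩, ?_⟩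
      left_inv := ?_
      right_inv := ?_ }
    · -- bound for toFun
      have h1 : (Y.1 k : ℕ) < n := (Y.1 k).isLt
      have h2 := sct_add_wgt σ (k : ℕ)
      have h3 := sct_zero_le σ (k : ℕ)
      omega
    · -- strict anti
      apply strictAnti_of_succ
      intro j hj
      have hY := Y.2 j hj
      have hw := wgt_succ σ (show j < d - 1 by omega)
      simp only [Fin.lt_def]
      by_cases hs : strictB σ j
      · rw [if_pos hs] at hY
        simp only [hs, if_true] at hw
        simp only [Fin.lt_def] at hY
        omega
      · have hs' : strictB σ j = false := by simpa using hs
        rw [if_neg hs] at hY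
        rw [hs'] at hw
        simp only [Bool.false_eq_true, if_false] at hw
        simp only [Fin.le_def] at hY
        omega
    · -- bound for invFun
      have h1 : (W.1 k : ℕ) < M := (W.1 k).isLt
      have h0 : (0 : ℕ) < d := hd
      have h2 := strictAnti_gap W.2 (k : ℕ) k.isLt ⟨0, h0⟩ (Nat.zero_le _)
      have h2' : (W.1 ⟨(k : ℕ), k.isLt⟩ : ℕ) + (k : ℕ) ≤ (W.1 ⟨0, h0⟩ : ℕ) := by
        simpa using h2
      have h2'' : (W.1 k : ℕ) + (k : ℕ) ≤ (W.1 ⟨0, h0⟩ : ℕ) := by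
        have : k = ⟨(k : ℕ), k.isLt⟩ := Fin.ext rfl
        rw [this]; exact h2'
      have h3 : (W.1 ⟨0, h0⟩ : ℕ) < M := (W.1 ⟨0, h0⟩).isLt
      have h4 := sct_add_wgt σ (k : ℕ)
      have h5 := sct_le σ (Nat.zero_le (k : ℕ))
      omega
    · -- conditions for invFun
      intro j hj
      have hW : (W.1 ⟨j + 1, hj⟩ : ℕ) < W.1 ⟨j, Nat.lt_of_succ_lt hj⟩ :=
        W.2 (show (⟨j, Nat.lt_of_succ_lt hj⟩ : Fin d) < ⟨j + 1, hj⟩ by simp [Fin.lt_def])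
      have hw := wgt_succ σ (show j < d - 1 by omega)
      -- wgt (j+1) ≤ W (j+1)
      have hgap := strictAnti_gap W.2 (d - 1) (by omega) ⟨j + 1, hj⟩ (by simp; omega)
      have hwle : wgt σ (j + 1) ≤ d - 1 - (j + 1) := wgt_le σ (j + 1)
      have hWge : wgt σ (j + 1) ≤ (W.1 ⟨j + 1, hj⟩ : ℕ) := by
        simp only [Fin.val_mk] at hgap
        omega
      by_cases hs : strictB σ j
      · rw [if_pos hs]
        simp only [hs, if_true] at hw
        simp only [Fin.lt_def]
        omega
      · have hs' : strictB σ j = false := by simpa using hs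
        rw [if_neg hs]
        rw [hs'] at hw
        simp only [Bool.false_eq_true, if_false] at hw
        simp only [Fin.le_def]
        omega
    · -- left_inv
      intro Y
      apply Subtype.ext
      funext k
      apply Fin.ext
      simp
    · -- right_inv
      intro W
      apply Subtype.ext
      funext k
      apply Fin.ext
      simp only []
      have h0 : (0 : ℕ) < d := hd
      have hgap := strictAnti_gap W.2 (d - 1) (by omega) k (by have := k.isLt; omega)
      have hwle : wgt σ (k : ℕ) ≤ d - 1 - (k : ℕ) := wgt_le σ (k : ℕ)
      have : wgt σ (k : ℕ) ≤ (W.1 k : ℕ) := by omega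
      omega
  rw [Nat.card_congr (e1.trans e2), card_strictAnti]
  -- final arithmetic
  have hvd : v' ≤ d - 1 := by
    have := sct_add_wgt σ 0; omega
  rcases Nat.lt_or_ge v' n with h | h
  · congr 1
    rw [hvv]
    omega
  · rw [Nat.choose_eq_zero_of_lt (by omega), Nat.choose_eq_zero_of_lt (by rw [hvv]; omega)]
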